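/- Let r ≥ 3 even and t = v(r-2). For H(X,Y) = Σ_{0<j<r} C(r,j)X^{r-j}Y^j, one has H(X, 2Y - X) ≡ -2X^r + 2rX^{r-1}Y - 2rX^{r-2}Y² modulo 2^{t+2}, coefficientwise. -/

import Mathlib

open Finset
open Finset

private lemma lt_two_pow_pred : ∀ m : ℕ, m + 3 < 2 ^ (m + 2) := by
  intro m
  induction m with
  | zero => norm_num
  | succ n ih => rw [pow_succ]; omega

/-- f2(k) + f2(k-1) + f2(k-2) ≤ k - 1 for k ≥ 3. -/
private lemma fact_three_le (k : ℕ) (hk : 3 ≤ k) :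
    k.factorization 2 + (k-1).factorization 2 + (k-2).factorization 2 ≤ k - 1 := by
  have hle : ∀ m : ℕ, m ≠ 0 → 2 ^ (m.factorization 2) ≤ m :=
    fun m hm => Nat.le_of_dvd (Nat.pos_of_ne_zero hm) (Nat.ordProj_dvd m 2)
  have hlt : ∀ m : ℕ, m ≠ 0 → m.factorization 2 < m :=
    fun m hm => Nat.factorization_lt 2 hm
  have hodd : ∀ m : ℕ, ¬ 2 ∣ m → m.factorization 2 = 0 :=
    fun m hm => Nat.factorization_eq_zero_of_not_dvd hm
  have h4 : ∀ m : ℕ, m ≠ 0 → ¬ (4 ∣ m) → m.factorization 2 ≤ 1 := by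
    intro m hm hm4
    by_contra h
    have h2 : (2:ℕ)^2 ∣ m :=
      (Nat.Prime.pow_dvd_iff_le_factorization Nat.prime_two hm).mpr (by omega)
    norm_num at h2
    exact hm4 h2
  rcases Nat.even_or_odd k with he | ho
  · -- k even
    have h2k : 2 ∣ k := he.two_dvd
    have hk1 : (k-1).factorization 2 = 0 := hodd _ (by omega)
    by_cases hfour : 4 ∣ k
    · -- then ¬ 4 ∣ k - 2, f(k-2) ≤ 1, and f k ≤ k - 2
      have ha : (k-2).factorization 2 ≤ 1 := h4 _ (by omega) (by omega)
      have hb : 2 ^ (k.factorization 2) ≤ k := hle _ (by omega)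
      have hc : k < 2 ^ (k - 1) := by
        have := lt_two_pow_pred (k - 3); have h3 : k - 3 + 3 = k := by omega
        rw [h3] at this; have h4 : k - 3 + 2 = k - 1 := by omega
        rwa [h4] at this
      have hd : k.factorization 2 < k - 1 := by
        have := lt_of_le_of_lt hb hc
        exact (Nat.pow_lt_pow_iff_right (by norm_num)).mp this
      omega
    · have ha : k.factorization 2 ≤ 1 := h4 _ (by omega) hfour
      have hb := hlt (k-2) (by omega)
      omega
  · have hmod := Nat.odd_iff.mp ho
    have h1 : k.factorization 2 = 0 := hodd _ (by omega)
    have h2 : (k-2).factorization 2 = 0 := hodd _ (by omega)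
    have h3 := hlt (k-1) (by omega)
    omega

private lemma step_choose (n k : ℕ) (h1 : 1 ≤ k) (h2 : k ≤ n) :
    n * (n-1).choose (k-1) = n.choose k * k := by
  obtain ⟨n', rfl⟩ : ∃ n', n = n' + 1 := ⟨n - 1, by omega⟩
  obtain ⟨k', rfl⟩ : ∃ k', k = k' + 1 := ⟨k - 1, by omega⟩
  simpa using Nat.add_one_mul_choose_eq n' k'

private lemma key_dvd (r k : ℕ) (hr : 3 ≤ r) (heven : Even r)
    (hk3 : 3 ≤ k) (hkr : k ≤ r) :
    2 ^ (padicValNat 2 (r-2) + 2) ∣ 2 ^ k * r.choose k := by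
  set t := padicValNat 2 (r-2) with ht
  have e1 : r * (r-1).choose (k-1) = r.choose k * k := step_choose r k (by omega) hkr
  have e2 : (r-1) * (r-2).choose (k-2) = (r-1).choose (k-1) * (k-1) := by
    have := step_choose (r-1) (k-1) (by omega) (by omega)
    rw [show r-1-1 = r-2 by omega, show k-1-1 = k-2 by omega] at this
    exact this
  have e3 : (r-2) * (r-3).choose (k-3) = (r-2).choose (k-2) * (k-2) := by
    have := step_choose (r-2) (k-2) (by omega) (by omega)
    rw [show r-2-1 = r-3 by omega, show k-2-1 = k-3 by omega] at this
    exact this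
  have big : r * (r-1) * (r-2) * (r-3).choose (k-3)
      = r.choose k * k * (k-1) * (k-2) := by
    calc r * (r-1) * (r-2) * (r-3).choose (k-3)
        = r * (r-1) * ((r-2) * (r-3).choose (k-3)) := by ring
      _ = r * (r-1) * ((r-2).choose (k-2) * (k-2)) := by rw [e3]
      _ = r * ((r-1) * (r-2).choose (k-2)) * (k-2) := by ring
      _ = r * ((r-1).choose (k-1) * (k-1)) * (k-2) := by rw [e2]
      _ = r * (r-1).choose (k-1) * (k-1) * (k-2) := by ring
      _ = r.choose k * k * (k-1) * (k-2) := by rw [e1]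
  -- pass to factorizations
  have hCrk' : r.choose k ≠ 0 := (Nat.choose_pos hkr).ne'
  have hC3 : (r-3).choose (k-3) ≠ 0 := (Nat.choose_pos (by omega)).ne'
  have Fmul : ∀ a b : ℕ, a ≠ 0 → b ≠ 0 →
      (a*b).factorization 2 = a.factorization 2 + b.factorization 2 := by
    intro a b ha hb; rw [Nat.factorization_mul ha hb]; rfl
  have hbig : r.factorization 2 + (r-1).factorization 2 + (r-2).factorization 2
        + ((r-3).choose (k-3)).factorization 2
      = (r.choose k).factorization 2 + k.factorization 2 + (k-1).factorization 2
        + (k-2).factorization 2 := by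
    have := congrArg (fun n => n.factorization 2) big
    have n1 : r ≠ 0 := by omega
    have n2 : r-1 ≠ 0 := by omega
    have n3 : r-2 ≠ 0 := by omega
    have n4 : k ≠ 0 := by omega
    have n5 : k-1 ≠ 0 := by omega
    have n6 : k-2 ≠ 0 := by omega
    rw [Fmul _ _ (Nat.mul_ne_zero (Nat.mul_ne_zero n1 n2) n3) hC3,
        Fmul _ _ (Nat.mul_ne_zero n1 n2) n3,
        Fmul _ _ n1 n2,
        Fmul _ _ (Nat.mul_ne_zero (Nat.mul_ne_zero hCrk' n4) n5) n6,
        Fmul _ _ (Nat.mul_ne_zero hCrk' n4) n5,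
        Fmul _ _ hCrk' n4] at this
    omega
  have hfr : 1 ≤ r.factorization 2 := by
    have : (2:ℕ)^1 ∣ r := by simpa using heven.two_dvd
    exact (Nat.Prime.pow_dvd_iff_le_factorization Nat.prime_two (by omega)).mp this
  have hfr2 : (r-2).factorization 2 = t := Nat.factorization_def _ Nat.prime_two
  have hB : k.factorization 2 + (k-1).factorization 2 + (k-2).factorization 2 ≤ k - 1 :=
    fact_three_le k hk3
  have hgoal : t + 2 ≤ k + (r.choose k).factorization 2 := by omega
  have hne : 2 ^ k * r.choose k ≠ 0 := by positivity
  refine (Nat.Prime.pow_dvd_iff_le_factorization Nat.prime_two hne).mpr ?_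
  rw [Fmul _ _ (by positivity) hCrk', Nat.Prime.factorization_pow Nat.prime_two,
     Finsupp.single_eq_same]
  exact hgoal
open MvPolynomial
/-- Let `r ≥ 3` be even and `t = v(r-2)`. For `H(X,Y) = Σ_{0<j<r} C(r,j)X^(r-j)Y^j`,
one has `H(X, 2Y - X) ≡ -2X^r + 2rX^(r-1)Y - 2rX^(r-2)Y²` modulo `2^(t+2)`. -/
theorem stmt_16 (r : ℕ) (hr : 3 ≤ r) (heven : Even r) :
    ∃ Q : MvPolynomial (Fin 2) ℤ,
      ∑ j ∈ Finset.Ioo 0 r, C ((r.choose j : ℤ)) * X 0 ^ (r - j) * (2 * X 1 - X 0) ^ j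
        = -(C (2 : ℤ) * X 0 ^ r)
          + C (2 * (r : ℤ)) * X 0 ^ (r - 1) * X 1
          - C (2 * (r : ℤ)) * X 0 ^ (r - 2) * X 1 ^ 2
          + C ((2 : ℤ) ^ (padicValNat 2 (r - 2) + 2)) * Q := by
  classical
  obtain ⟨n, rfl⟩ : ∃ n, r = n + 3 := ⟨r - 3, by omega⟩
  set t := padicValNat 2 (n + 3 - 2) with ht
  set x : MvPolynomial (Fin 2) ℤ := X 0 with hx
  set y : MvPolynomial (Fin 2) ℤ := X 1 with hy
  have ht2 : (2:ℕ)^t ∣ n + 1 := by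
    have := pow_padicValNat_dvd (p := 2) (n := n + 3 - 2)
    simpa [ht] using this
  have htle : t ≤ n := by
    have h1 : (2:ℕ)^t ≤ n + 1 := Nat.le_of_dvd (by omega) ht2
    have h2 : t < 2^t := Nat.lt_two_pow_self
    omega
  -- Step A : the sum equals (2y)^r - x^r - (2y - x)^r
  have hsplit1 : Finset.range (n+3+1) = insert 0 (insert (n+3) (Finset.Ioo 0 (n+3))) := by
    ext m; simp
  have hA := add_pow (2 * y - x) x (n+3)
  rw [hsplit1, Finset.sum_insert (by simp), Finset.sum_insert (by simp)] at hA
  have stepA : ∑ j ∈ Finset.Ioo 0 (n+3), C (((n+3).choose j : ℤ)) * x ^ (n+3 - j) * (2 * y - x) ^ j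
      = (2*y)^(n+3) - x^(n+3) - (2*y - x)^(n+3) := by
    have e1 : ∑ j ∈ Finset.Ioo 0 (n+3), C (((n+3).choose j : ℤ)) * x ^ (n+3 - j) * (2 * y - x) ^ j
        = ∑ j ∈ Finset.Ioo 0 (n+3), (2*y - x) ^ j * x ^ (n+3 - j) * (((n+3).choose j : ℕ) : MvPolynomial (Fin 2) ℤ) := by
      refine Finset.sum_congr rfl fun j _ => ?_
      rw [map_natCast C]; ring
    rw [e1]
    have e2 : (2*y - x + x) = 2*y := by ring
    rw [e2] at hA
    simp only [pow_zero, Nat.sub_zero, Nat.sub_self, Nat.choose_self, Nat.choose_zero_right,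
      Nat.cast_one, one_mul, mul_one] at hA
    linear_combination -hA
  -- Step B : (2y-x)^r = (x - 2y)^r and expand
  have stepB : (2*y - x)^(n+3) = (x - 2*y)^(n+3) := by
    rw [show (2*y - x) = -(x - 2*y) by ring, heven.neg_pow]
  have hsplit2 : Finset.range (n+3+1) = insert 0 (insert 1 (insert 2 (Finset.Icc 3 (n+3)))) := by
    ext m; simp; omega
  have hB := add_pow (-(2*y)) x (n+3)
  rw [hsplit2, Finset.sum_insert (by simp), Finset.sum_insert (by simp),
    Finset.sum_insert (by simp)] at hB
  have e3 : (-(2*y) + x) = x - 2*y := by ring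
  rw [e3] at hB
  -- convert the tail sum
  have e4 : ∑ k ∈ Finset.Icc 3 (n+3), (-(2*y))^k * x^(n+3-k) * (((n+3).choose k : ℕ) : MvPolynomial (Fin 2) ℤ)
      = ∑ k ∈ Finset.Icc 3 (n+3), C ((-2:ℤ)^k * ((n+3).choose k : ℤ)) * x^(n+3-k) * y^k := by
    refine Finset.sum_congr rfl fun k _ => ?_
    rw [map_mul, map_natCast C, map_pow]
    have : (C (-2 : ℤ) : MvPolynomial (Fin 2) ℤ) = -(2:MvPolynomial (Fin 2) ℤ) := by
      rw [map_neg, map_ofNat]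
    rw [this]; ring
  rw [e4] at hB
  set S := ∑ k ∈ Finset.Icc 3 (n+3), C ((-2:ℤ)^k * ((n+3).choose k : ℤ)) * x^(n+3-k) * y^k with hS
  set D : MvPolynomial (Fin 2) ℤ :=
    C ((2:ℤ)^(n+3)) * y^(n+3) - C (2*((n:ℤ)+3)*((n:ℤ)+1)) * x^(n+1) * y^2 - S with hD
  -- Divisibility of D
  have hdvd : (C ((2:ℤ)^(t+2)) : MvPolynomial (Fin 2) ℤ) ∣ D := by
    refine dvd_sub (dvd_sub ?_ ?_) ?_
    · exact dvd_mul_of_dvd_left (map_dvd C (pow_dvd_pow 2 (by omega))) _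
    · refine dvd_mul_of_dvd_left (dvd_mul_of_dvd_left (map_dvd C ?_) _) _
      obtain ⟨m, hm⟩ := heven
      have h4 : (4:ℤ) ∣ 2*((n:ℤ)+3) := ⟨m, by omega⟩
      have h2t : ((2:ℤ))^t ∣ (n:ℤ)+1 := by
        have := Int.natCast_dvd_natCast.mpr ht2
        push_cast at this; exact_mod_cast this
      have : (2:ℤ)^(t+2) = 4 * 2^t := by rw [pow_add]; ring
      rw [this]
      exact mul_dvd_mul h4 h2t
    · refine Finset.dvd_sum fun k hk => ?_
      rw [Finset.mem_Icc] at hk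
      refine dvd_mul_of_dvd_left (dvd_mul_of_dvd_left (map_dvd C ?_) _) _
      have hnat := key_dvd (n+3) k hr heven hk.1 hk.2
      have hint : ((2:ℤ))^(t+2) ∣ 2^k * ((n+3).choose k : ℤ) := by
        have := Int.natCast_dvd_natCast.mpr hnat
        push_cast at this
        exact_mod_cast this
      have hrw : (-2:ℤ)^k * ((n+3).choose k : ℤ) = (-1)^k * (2^k * ((n+3).choose k : ℤ)) := by
        rw [show ((-2:ℤ))^k = (-1)^k * 2^k by rw [← mul_pow]; norm_num]; ring
      rw [hrw]
      exact hint.mul_left _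
  obtain ⟨Q, hQ⟩ := hdvd
  refine ⟨Q, ?_⟩
  rw [stepA, stepB, hB, ← hQ]
  -- now a polynomial identity
  have hc2nat : (n+3).choose 2 * 2 = (n+3)*(n+2) := by
    have h1 : (n+3).choose 2 = (n+3) * (n+3-1) / 2 := Nat.choose_two_right (n+3)
    have h2 : Even ((n+3) * (n+2)) := by
      have := Nat.even_mul_succ_self (n+2)
      rwa [mul_comm] at this
    have h3 : 2 ∣ (n+3) * (n+2) := h2.two_dvd
    rw [show n+3-1 = n+2 from rfl] at h1
    omega
  have hc2P := congrArg (Nat.cast : ℕ → MvPolynomial (Fin 2) ℤ) hc2nat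
  push_cast at hc2P
  simp only [hD, pow_zero, pow_one, Nat.sub_zero, Nat.choose_zero_right, Nat.choose_one_right,
    Nat.choose_self, Nat.cast_one, one_mul, mul_one,
    show n+3-1 = n+2 from rfl, show n+3-2 = n+1 from rfl,
    map_mul, map_pow, map_ofNat, map_natCast, map_add, map_one, map_neg]
  push_cast
  linear_combination (-2 * x^(n+1) * y^2) * hc2P
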